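/- Let φ > 0 and G' ≥ 0 be real numbers, and suppose the price d > 0 paid per item of Good equals the price d' > 0 paid per item of Right (d = d'). Then the potential frustration pf = max(0, (φ - G' - (d'/(d+d'))·|φ - G'|)/φ) satisfies pf ≤ 1/2. -/

import Mathlib

theorem potential_frustration_le_half (φ G' d d' : ℝ) (hφ : 0 < φ) (hG' : 0 ≤ G')
    (hd : 0 < d) (hd' : 0 < d') (hdd' : d = d') :
    max 0 ((φ - G' - d' / (d + d') * |φ - G'|) / φ) ≤ 1 / 2 := by
  subst hdd'
  rw [max_le_iff]
  refine ⟨by norm_num, ?_⟩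
  rw [div_le_iff₀ hφ]
  rcases abs_cases (φ - G') with ⟨h, h2⟩ | ⟨h, h2⟩ <;>
    · rw [h, div_mul_eq_mul_div, sub_div' (by positivity : d + d ≠ 0),
        div_le_iff₀ (by linarith : (0:ℝ) < d + d)]
      nlinarith
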